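/- arXiv:1607.04864 — 3 statements merged into one kernel-verified Lean document; each statement's English description precedes it below -/
import Mathlib

section
/- Let ν be a Borel σ-finite measure on ℝ such that Z(x) = ∫ g(z−x) dν(z) is finite for all x, where g is the standard Gaussian density. Define G(x,y) = (∫_{(−∞,y]} g(z−x) dν(z)) / Z(x). Then G(x,y) is nondecreasing in y, and if ν((y,∞)) > 0 and ν((−∞,y]) > 0, then G(x,y) is strictly decreasing in x. -/
open MeasureTheory Set

noncomputable def gauss (u : ℝ) : ℝ := (Real.sqrt (2 * Real.pi))⁻¹ * Real.exp (-u ^ 2 / 2)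

lemma gauss_pos (u : ℝ) : 0 < gauss u := by
  unfold gauss
  positivity

lemma gauss_mul (a b : ℝ) :
    gauss a * gauss b = ((Real.sqrt (2 * Real.pi))⁻¹)^2 * Real.exp ((-a^2 + -b^2)/2) := by
  unfold gauss
  rw [mul_mul_mul_comm, ← Real.exp_add]
  congr 1
  · ring_nf
  · ring_nf

lemma gauss_key {z w x x' : ℝ} (hzw : z < w) (hxx' : x < x') :
    gauss (z - x') * gauss (w - x) < gauss (z - x) * gauss (w - x') := by
  rw [gauss_mul, gauss_mul]
  have hc : (0:ℝ) < ((Real.sqrt (2 * Real.pi))⁻¹)^2 := by positivity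
  rw [mul_lt_mul_iff_right₀ hc, Real.exp_lt_exp]
  nlinarith [mul_pos (sub_pos.2 hzw) (sub_pos.2 hxx')]

theorem stmt0 (ν : Measure ℝ) [SigmaFinite ν]
    (hZ : ∀ x : ℝ, Integrable (fun z => gauss (z - x)) ν) :
    (∀ x : ℝ, Monotone (fun y : ℝ =>
      (∫ z in Iic y, gauss (z - x) ∂ν) / ∫ z, gauss (z - x) ∂ν)) ∧
    (∀ y : ℝ, 0 < ν (Ioi y) → 0 < ν (Iic y) →
      StrictAnti (fun x : ℝ =>
        (∫ z in Iic y, gauss (z - x) ∂ν) / ∫ z, gauss (z - x) ∂ν)) := by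
  constructor
  · intro x y₁ y₂ h
    simp only
    gcongr
    · exact integral_nonneg fun z => (gauss_pos _).le
    · exact ae_of_all _ fun z => (gauss_pos _).le
    · exact (hZ x).integrableOn
  · intro y hIoi hIic x x' hxx'
    simp only
    set A : ℝ → ℝ := fun t => ∫ z in Iic y, gauss (z - t) ∂ν with hA
    set B : ℝ → ℝ := fun t => ∫ z in Ioi y, gauss (z - t) ∂ν with hB
    have hsplit : ∀ t, ∫ z, gauss (z - t) ∂ν = A t + B t := by
      intro t
      rw [hA, hB]
      simp only
      rw [← compl_Iic, integral_add_compl measurableSet_Iic (hZ t)]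
    have hApos : ∀ t, 0 < A t := by
      intro t
      rw [hA]
      apply (integral_pos_iff_support_of_nonneg (fun z => (gauss_pos _).le)
        ((hZ t).restrict)).2
      have : Function.support (fun z => gauss (z - t)) = univ :=
        eq_univ_of_forall fun z => (gauss_pos _).ne'
      rw [this]
      rwa [Measure.restrict_apply_univ]
    have hBpos : ∀ t, 0 < B t := by
      intro t
      rw [hB]
      apply (integral_pos_iff_support_of_nonneg (fun z => (gauss_pos _).le)
        ((hZ t).restrict)).2
      have : Function.support (fun z => gauss (z - t)) = univ :=
        eq_univ_of_forall fun z => (gauss_pos _).ne'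
      rw [this]
      rwa [Measure.restrict_apply_univ]
    -- key cross inequality
    have key : A x' * B x < A x * B x' := by
      set μ : Measure (ℝ × ℝ) := (ν.restrict (Iic y)).prod (ν.restrict (Ioi y)) with hμ
      have hi1 : Integrable (fun p : ℝ × ℝ => gauss (p.1 - x) * gauss (p.2 - x')) μ :=
        ((hZ x).restrict).mul_prod ((hZ x').restrict)
      have hi2 : Integrable (fun p : ℝ × ℝ => gauss (p.1 - x') * gauss (p.2 - x)) μ :=
        ((hZ x').restrict).mul_prod ((hZ x).restrict)
      have hmem : ∀ᵐ p ∂μ, p ∈ Iic y ×ˢ Ioi y := by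
        rw [hμ, Measure.prod_restrict]
        exact ae_restrict_mem (measurableSet_Iic.prod measurableSet_Ioi)
      have hpos : 0 < ∫ p, (gauss (p.1 - x) * gauss (p.2 - x')
          - gauss (p.1 - x') * gauss (p.2 - x)) ∂μ := by
        apply (integral_pos_iff_support_of_nonneg_ae _ (hi1.sub hi2)).2
        · refine lt_of_lt_of_le ?_ (measure_mono ?_ :
            μ (Iic y ×ˢ Ioi y) ≤ μ (Function.support _))
          · rw [hμ, Measure.prod_prod, Measure.restrict_apply_self, Measure.restrict_apply_self]
            exact ENNReal.mul_pos hIic.ne' hIoi.ne'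
          · intro p hp
            have := gauss_key (lt_of_le_of_lt hp.1 hp.2) hxx'
            simp only [Function.mem_support]
            exact sub_ne_zero.2 (ne_of_gt this)
        · filter_upwards [hmem] with p hp
          have := gauss_key (lt_of_le_of_lt hp.1 hp.2) hxx'
          simpa using this.le
      rw [integral_sub hi1 hi2] at hpos
      simp only [hμ] at hpos
      rw [integral_prod_mul (f := fun u => gauss (u - x)) (g := fun u => gauss (u - x')),
        integral_prod_mul (f := fun u => gauss (u - x')) (g := fun u => gauss (u - x))] at hpos
      exact sub_pos.mp hpos
    rw [div_lt_div_iff₀ (by rw [hsplit]; linarith [hApos x', hBpos x'])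
      (by rw [hsplit]; linarith [hApos x, hBpos x])]
    rw [hsplit x, hsplit x']
    nlinarith [hApos x, hApos x', hBpos x, hBpos x']
end

section
/- Suppose real sequences (a_n) and (g_n) satisfy: a_n/n → ν as n → ∞, |a_{2n} − 2a_n| ≤ g_n for all sufficiently large n, and g_{2n}/g_n → ψ as n → ∞ with ψ < 2. Then for any c > 1/(2−ψ), the inequality |a_n − νn| ≤ c·g_n holds for all sufficiently large n (depending on c). -/
open Filter Topology Finset

lemma geom_aux_stmt2 {r : ℝ} (h0 : 0 ≤ r) (h1 : r < 1) (k : ℕ) :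
    ∑ j ∈ Finset.range k, r ^ j ≤ 1 / (1 - r) := by
  have hne : r ≠ 1 := ne_of_lt h1
  rw [geom_sum_eq hne]
  have hpk : 0 ≤ r ^ k := pow_nonneg h0 k
  have h2 : 0 < 1 - r := by linarith
  have h3 : (r ^ k - 1) / (r - 1) = (1 - r ^ k) / (1 - r) := by
    rw [← neg_div_neg_eq]; ring_nf
  rw [h3]
  gcongr
  linarith

theorem stmt2 (a g : ℕ → ℝ) (ν ψ : ℝ) (hg : ∀ n, 0 < g n)
    (ha : Tendsto (fun n : ℕ => a n / n) atTop (𝓝 ν))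
    (hdg : ∀ᶠ n in atTop, |a (2 * n) - 2 * a n| ≤ g n)
    (hψ : Tendsto (fun n : ℕ => g (2 * n) / g n) atTop (𝓝 ψ))
    (hψ2 : ψ < 2) :
    ∀ c : ℝ, 1 / (2 - ψ) < c → ∀ᶠ n in atTop, |a n - ν * n| ≤ c * g n := by
  intro c hc
  obtain ⟨b, hbdef⟩ : ∃ b : ℕ → ℝ, b = fun n => a n - ν * n := ⟨_, rfl⟩
  have hψ0 : 0 ≤ ψ := ge_of_tendsto' hψ fun n => (div_pos (hg _) (hg _)).le
  have h2ψ : (0:ℝ) < 2 - ψ := by linarith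
  have hc0 : 0 < c := lt_trans (by positivity) hc
  obtain ⟨ρ, hρdef⟩ : ∃ ρ : ℝ, ρ = 2 - 1 / c := ⟨_, rfl⟩
  have hρψ : ψ < ρ := by
    have h1 : 1 < c * (2 - ψ) := (div_lt_iff₀ h2ψ).mp hc
    have h2 : 1 / c < 2 - ψ := by
      rw [div_lt_iff₀ hc0]; nlinarith
    rw [hρdef]; linarith
  have hρ0 : 0 ≤ ρ := le_trans hψ0 hρψ.le
  have hρ2 : ρ < 2 := by
    have : 0 < 1 / c := by positivity
    rw [hρdef]; linarith
  have hgρ : ∀ᶠ n in atTop, g (2 * n) ≤ ρ * g n := by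
    filter_upwards [hψ.eventually_lt_const hρψ] with n hn
    rw [div_lt_iff₀ (hg n)] at hn
    linarith
  obtain ⟨N₀, hN₀⟩ := eventually_atTop.mp (hdg.and hgρ)
  set N := max N₀ 1 with hN
  have hNdg : ∀ m, N ≤ m → |a (2 * m) - 2 * a m| ≤ g m := fun m hm =>
    (hN₀ m (le_trans (le_max_left _ _) hm)).1
  have hNg : ∀ m, N ≤ m → g (2 * m) ≤ ρ * g m := fun m hm =>
    (hN₀ m (le_trans (le_max_left _ _) hm)).2
  have hbd : ∀ m, N ≤ m → |b (2 * m) - 2 * b m| ≤ g m := by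
    intro m hm
    have : b (2 * m) - 2 * b m = a (2 * m) - 2 * a m := by
      simp only [hbdef]; push_cast; ring
    rw [this]; exact hNdg m hm
  have hgrow : ∀ (n : ℕ), N ≤ n → ∀ k, g (2 ^ k * n) ≤ ρ ^ k * g n := by
    intro n hn k
    induction k with
    | zero => simp
    | succ k ih =>
      have hm : N ≤ 2 ^ k * n := le_trans hn (Nat.le_mul_of_pos_left n (by positivity))
      have h1 : g (2 * (2 ^ k * n)) ≤ ρ * g (2 ^ k * n) := hNg _ hm
      have h2 : 2 ^ (k + 1) * n = 2 * (2 ^ k * n) := by ring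
      rw [h2, pow_succ]
      calc g (2 * (2 ^ k * n)) ≤ ρ * g (2 ^ k * n) := h1
        _ ≤ ρ * (ρ ^ k * g n) := mul_le_mul_of_nonneg_left ih hρ0
        _ = ρ ^ k * ρ * g n := by ring
  have key : ∀ (n : ℕ), N ≤ n → ∀ k,
      |b n| ≤ |b (2 ^ k * n)| / 2 ^ k + (∑ j ∈ range k, (ρ / 2) ^ j) * (g n / 2) := by
    intro n hn k
    induction k with
    | zero => simp
    | succ k ih =>
      have hm : N ≤ 2 ^ k * n := le_trans hn (Nat.le_mul_of_pos_left n (by positivity))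
      have h1 : |b (2 * (2 ^ k * n)) - 2 * b (2 ^ k * n)| ≤ g (2 ^ k * n) := hbd _ hm
      have h2 : |b (2 ^ k * n)| ≤ (|b (2 * (2 ^ k * n))| + g (2 ^ k * n)) / 2 := by
        have ht := abs_sub_abs_le_abs_sub (2 * b (2 ^ k * n)) (b (2 * (2 ^ k * n)))
        have h4 : |2 * b (2 ^ k * n) - b (2 * (2 ^ k * n))|
            = |b (2 * (2 ^ k * n)) - 2 * b (2 ^ k * n)| := abs_sub_comm _ _
        have h3 : |2 * b (2 ^ k * n)| = 2 * |b (2 ^ k * n)| := by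
          rw [abs_mul]; norm_num
        rw [h4, h3] at ht
        linarith
      have hgk : g (2 ^ k * n) ≤ ρ ^ k * g n := hgrow n hn k
      have h4 : (2:ℕ) ^ (k + 1) * n = 2 * (2 ^ k * n) := by ring
      have hp : (0:ℝ) < 2 ^ k := by positivity
      calc |b n| ≤ |b (2 ^ k * n)| / 2 ^ k + (∑ j ∈ range k, (ρ / 2) ^ j) * (g n / 2) := ih
        _ ≤ ((|b (2 * (2 ^ k * n))| + g (2 ^ k * n)) / 2) / 2 ^ k
              + (∑ j ∈ range k, (ρ / 2) ^ j) * (g n / 2) := by gcongr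
        _ ≤ ((|b (2 * (2 ^ k * n))| + ρ ^ k * g n) / 2) / 2 ^ k
              + (∑ j ∈ range k, (ρ / 2) ^ j) * (g n / 2) := by gcongr
        _ = |b (2 ^ (k + 1) * n)| / 2 ^ (k + 1)
              + (∑ j ∈ range (k + 1), (ρ / 2) ^ j) * (g n / 2) := by
            rw [h4, sum_range_succ, pow_succ]
            field_simp
            have hX : ((1:ℝ) / 2) ^ k * 2 ^ k = 1 := by rw [← mul_pow]; norm_num
            linear_combination (-(ρ ^ k * g n)) * hX
  have hr1 : ρ / 2 < 1 := by linarith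
  have hr0 : 0 ≤ ρ / 2 := by linarith
  have h1ρ : 1 - ρ / 2 = 1 / (2 * c) := by
    rw [hρdef]; field_simp; ring
  have hsum : ∀ k, (∑ j ∈ range k, (ρ / 2) ^ j) ≤ 2 * c := by
    intro k
    calc (∑ j ∈ range k, (ρ / 2) ^ j) ≤ 1 / (1 - ρ / 2) := geom_aux_stmt2 hr0 hr1 k
      _ = 2 * c := by rw [h1ρ, one_div_one_div]
  rw [eventually_atTop]
  refine ⟨N, fun n hn => ?_⟩
  have hn1 : 1 ≤ n := le_trans (le_max_right _ _) hn
  have hnR : (0:ℝ) < n := by exact_mod_cast hn1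
  have hbound : ∀ k, |b n| ≤ |b (2 ^ k * n)| / 2 ^ k + c * g n := by
    intro k
    calc |b n| ≤ |b (2 ^ k * n)| / 2 ^ k + (∑ j ∈ range k, (ρ / 2) ^ j) * (g n / 2) :=
          key n hn k
      _ ≤ |b (2 ^ k * n)| / 2 ^ k + (2 * c) * (g n / 2) := by
          gcongr
          · exact (div_pos (hg n) two_pos).le
          · exact hsum k
      _ = |b (2 ^ k * n)| / 2 ^ k + c * g n := by ring
  have hbm : Tendsto (fun m : ℕ => a m / m - ν) atTop (𝓝 0) := by
    have := ha.sub_const ν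
    simpa using this
  have hcomp : Tendsto (fun k : ℕ => 2 ^ k * n) atTop atTop := by
    apply tendsto_atTop_mono (fun k => ?_) tendsto_id
    calc (k : ℕ) ≤ 2 ^ k := Nat.lt_two_pow_self.le
      _ ≤ 2 ^ k * n := Nat.le_mul_of_pos_right _ hn1
  have htend : Tendsto (fun k : ℕ => |b (2 ^ k * n)| / 2 ^ k + c * g n) atTop
      (𝓝 (c * g n)) := by
    have h0 : Tendsto (fun k : ℕ => |a (2 ^ k * n) / ((2 ^ k * n : ℕ) : ℝ) - ν| * n)
        atTop (𝓝 0) := by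
      have := ((hbm.comp hcomp).abs).mul_const (n : ℝ)
      simpa using this
    have heq : ∀ k : ℕ, |b (2 ^ k * n)| / 2 ^ k
        = |a (2 ^ k * n) / ((2 ^ k * n : ℕ) : ℝ) - ν| * n := by
      intro k
      have hM : (0:ℝ) < ((2 ^ k * n : ℕ) : ℝ) := by positivity
      have h1 : a (2 ^ k * n) / ((2 ^ k * n : ℕ) : ℝ) - ν
          = b (2 ^ k * n) / ((2 ^ k * n : ℕ) : ℝ) := by
        simp only [hbdef]
        field_simp
      rw [h1, abs_div, abs_of_pos hM]
      rw [div_mul_eq_mul_div, eq_comm]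
      rw [div_eq_div_iff hM.ne' (by positivity : ((2:ℝ) ^ k) ≠ 0)]
      push_cast
      ring
    have := h0.add_const (c * g n)
    simp only [zero_add] at this
    exact this.congr fun k => by rw [heq k]
  have hfin : |b n| ≤ c * g n := ge_of_tendsto htend (Eventually.of_forall hbound)
  simpa only [hbdef] using hfin
end

section
/- Fix m < n in ℤ and x ≤ x′ in ℝ. For the Gaussian polymer with fixed continuous potential (F_k), and any y ∈ ℝ, the point-to-point polymer measure μ_{x,y}^{m,n} is stochastically dominated by μ_{x′,y}^{m,n} (as measures on ℝ^{n−m−1}, the intermediate coordinates, with the coordinatewise partial order). -/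
open MeasureTheory Set

/-- The path `(x, z_1, …, z_s, y)`: `pathPoint s x y z i` is the `i`-th point. -/
noncomputable def pathPoint (s : ℕ) (x y : ℝ) (z : Fin s → ℝ) (i : ℕ) : ℝ :=
  if h0 : i = 0 then x else if hs : i ≤ s then z ⟨i - 1, by omega⟩ else y

/-- The Gibbs weight `∏_{k=m}^{n-1} g(x_{k+1}-x_k) e^{-F_k(x_k)}` of the path from
`(m, x)` to `(n, y) = (m+s+1, y)` with intermediate points `z`. -/
noncomputable def pathWeight (F : ℤ → ℝ → ℝ) (m : ℤ) (s : ℕ) (x y : ℝ) (z : Fin s → ℝ) : ℝ :=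
  ∏ k ∈ Finset.range (s + 1),
    gauss (pathPoint s x y z (k + 1) - pathPoint s x y z k) *
      Real.exp (-F (m + k) (pathPoint s x y z k))

/-- The point-to-point polymer measure `μ_{x,y}^{m,n}` (on the `n-m-1 = s` intermediate
coordinates), i.e. the normalized measure with density `pathWeight`. -/
noncomputable def polymerMeasure (F : ℤ → ℝ → ℝ) (m : ℤ) (s : ℕ) (x y : ℝ) :
    Measure (Fin s → ℝ) :=
  (ENNReal.ofReal (∫ w : Fin s → ℝ, pathWeight F m s x y w))⁻¹ •
    volume.withDensity fun z => ENNReal.ofReal (pathWeight F m s x y z)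

lemma continuous_gauss : Continuous gauss := by
  unfold gauss; fun_prop

lemma gauss_mlr {a b x x' : ℝ} (hab : b ≤ a) (hxx : x ≤ x') :
    gauss (b - x') * gauss (a - x) ≤ gauss (a - x') * gauss (b - x) := by
  unfold gauss
  have key : Real.exp (-(b - x') ^ 2 / 2) * Real.exp (-(a - x) ^ 2 / 2) ≤
      Real.exp (-(a - x') ^ 2 / 2) * Real.exp (-(b - x) ^ 2 / 2) := by
    rw [← Real.exp_add, ← Real.exp_add]
    apply Real.exp_le_exp.2
    nlinarith [mul_nonneg (sub_nonneg.2 hab) (sub_nonneg.2 hxx)]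
  have hk : (0:ℝ) ≤ (Real.sqrt (2 * Real.pi))⁻¹ := by positivity
  have := mul_le_mul_of_nonneg_left key (mul_nonneg hk hk)
  linear_combination this

lemma integrable_gauss_sub (a : ℝ) : Integrable (fun t => gauss (t - a)) := by
  have h : Integrable (fun t : ℝ => Real.exp (-(1/2 : ℝ) * t ^ 2)) :=
    integrable_exp_neg_mul_sq (by norm_num)
  have := (h.comp_sub_right a).const_mul (Real.sqrt (2 * Real.pi))⁻¹
  refine this.congr (ae_of_all _ fun t => ?_)
  unfold gauss; ring_nf

lemma integral_gauss_sub (a : ℝ) : ∫ t, gauss (t - a) = 1 := by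
  have h1 : ∫ t : ℝ, gauss t = 1 := by
    unfold gauss
    rw [MeasureTheory.integral_const_mul]
    have : ∀ t : ℝ, Real.exp (-t ^ 2 / 2) = Real.exp (-(1/2 : ℝ) * t ^ 2) := by
      intro t; ring_nf
    simp_rw [this]
    rw [integral_gaussian]
    rw [show Real.pi / (1/2) = 2 * Real.pi by ring]
    rw [inv_mul_cancel₀ (by positivity)]
  rw [integral_sub_right_eq_self (fun t => gauss t) a, h1]

lemma gauss_shift (c a t : ℝ) :
    gauss (t - a) * Real.exp (c * t) =
      Real.exp (c * a + c ^ 2 / 2) * gauss (t - a - c) := by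
  unfold gauss
  have h : Real.exp (-(t - a) ^ 2 / 2) * Real.exp (c * t) =
      Real.exp (c * a + c ^ 2 / 2) * Real.exp (-(t - a - c) ^ 2 / 2) := by
    rw [← Real.exp_add, ← Real.exp_add]; congr 1; ring
  linear_combination (Real.sqrt (2 * Real.pi))⁻¹ * h

lemma gauss_abs_exp_le {c : ℝ} (hc : 0 ≤ c) (a t : ℝ) :
    gauss (t - a) * Real.exp (c * |t|) ≤
      Real.exp (c * a + c ^ 2 / 2) * gauss (t - a - c) +
        Real.exp (-c * a + (-c) ^ 2 / 2) * gauss (t - a - -c) := by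
  have h1 : Real.exp (c * |t|) ≤ Real.exp (c * t) + Real.exp (-c * t) := by
    rcases abs_cases t with ⟨h, _⟩ | ⟨h, _⟩
    · rw [h]; nlinarith [Real.exp_pos (-c * t)]
    · rw [h]
      rw [show c * -t = -c * t by ring]
      nlinarith [Real.exp_pos (c * t)]
  calc gauss (t - a) * Real.exp (c * |t|)
      ≤ gauss (t - a) * (Real.exp (c * t) + Real.exp (-c * t)) := by
        exact mul_le_mul_of_nonneg_left h1 (gauss_pos _).le
    _ = gauss (t - a) * Real.exp (c * t) + gauss (t - a) * Real.exp (-c * t) := by ring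
    _ = _ := by rw [gauss_shift c a t, gauss_shift (-c) a t]

lemma integrable_gauss_shift (b : ℝ) (d : ℝ) : Integrable (fun t => gauss (t - b - d)) := by
  have : (fun t => gauss (t - b - d)) = fun t => gauss (t - (b + d)) := by
    funext t; congr 1; ring
  rw [this]; exact integrable_gauss_sub _

lemma integral_gauss_shift (b : ℝ) (d : ℝ) : ∫ t, gauss (t - b - d) = 1 := by
  have : (fun t => gauss (t - b - d)) = fun t => gauss (t - (b + d)) := by
    funext t; congr 1; ring
  rw [this]; exact integral_gauss_sub _

lemma integrable_gauss_abs_exp {c : ℝ} (hc : 0 ≤ c) (a : ℝ) :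
    Integrable (fun t => gauss (t - a) * Real.exp (c * |t|)) := by
  have hD1 : Integrable (fun t => Real.exp (c * a + c ^ 2 / 2) * gauss (t - a - c)) :=
    (integrable_gauss_shift a c).const_mul _
  have hD2 : Integrable (fun t => Real.exp (-c * a + (-c) ^ 2 / 2) * gauss (t - a - -c)) :=
    (integrable_gauss_shift a (-c)).const_mul _
  refine (hD1.add hD2).mono' ?_ (ae_of_all _ fun t => ?_)
  · exact (continuous_gauss.comp (by fun_prop)).mul (by fun_prop) |>.aestronglyMeasurable
  · rw [Real.norm_of_nonneg (mul_nonneg (gauss_pos _).le (Real.exp_pos _).le)]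
    exact gauss_abs_exp_le hc a t

lemma integral_gauss_abs_exp_le {c : ℝ} (hc : 0 ≤ c) (a : ℝ) :
    ∫ t, gauss (t - a) * Real.exp (c * |t|) ≤ 2 * Real.exp (c ^ 2 / 2 + c * |a|) := by
  have hD1 : Integrable (fun t => Real.exp (c * a + c ^ 2 / 2) * gauss (t - a - c)) :=
    (integrable_gauss_shift a c).const_mul _
  have hD2 : Integrable (fun t => Real.exp (-c * a + (-c) ^ 2 / 2) * gauss (t - a - -c)) :=
    (integrable_gauss_shift a (-c)).const_mul _
  have h1 := integral_mono (integrable_gauss_abs_exp hc a) (hD1.add hD2)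
    (fun t => gauss_abs_exp_le hc a t)
  refine h1.trans ?_
  simp only [Pi.add_apply]
  rw [integral_add hD1 hD2, integral_const_mul, integral_const_mul,
    integral_gauss_shift, integral_gauss_shift, mul_one, mul_one]
  have b1 : Real.exp (c * a + c ^ 2 / 2) ≤ Real.exp (c ^ 2 / 2 + c * |a|) :=
    Real.exp_le_exp.2 (by nlinarith [le_abs_self a, mul_le_mul_of_nonneg_left (le_abs_self a) hc])
  have b2 : Real.exp (-c * a + (-c) ^ 2 / 2) ≤ Real.exp (c ^ 2 / 2 + c * |a|) := by
    refine Real.exp_le_exp.2 ?_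
    rw [neg_sq]
    nlinarith [mul_le_mul_of_nonneg_left (neg_le_abs a) hc]
  linarith


lemma pathPoint_zero (s : ℕ) (x y : ℝ) (z : Fin s → ℝ) : pathPoint s x y z 0 = x := by
  simp [pathPoint]

lemma pathPoint_one (s : ℕ) (x y : ℝ) (z : Fin (s + 1) → ℝ) :
    pathPoint (s + 1) x y z 1 = z 0 := by
  simp [pathPoint]

lemma pathPoint_succ (s : ℕ) (x y : ℝ) (z : Fin (s + 1) → ℝ) (i : ℕ) :
    pathPoint (s + 1) x y z (i + 1) = pathPoint s (z 0) y (fun j => z j.succ) i := by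
  unfold pathPoint
  rcases Nat.eq_zero_or_pos i with hi | hi
  · subst hi; simp
  · by_cases h : i ≤ s
    · rw [dif_neg (by omega), dif_pos (by omega : i + 1 ≤ s + 1), dif_neg (by omega), dif_pos h]
      show z _ = z (Fin.succ _)
      congr 1
      ext
      simp [Fin.succ]
      omega
    · rw [dif_neg (by omega), dif_neg (by omega : ¬(i + 1 ≤ s + 1)), dif_neg (by omega),
        dif_neg h]

lemma pathWeight_succ (F : ℤ → ℝ → ℝ) (m : ℤ) (s : ℕ) (x y : ℝ) (z : Fin (s + 1) → ℝ) :
    pathWeight F m (s + 1) x y z =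
      gauss (z 0 - x) * Real.exp (-F m x) *
        pathWeight F (m + 1) s (z 0) y (fun j => z j.succ) := by
  unfold pathWeight
  rw [Finset.prod_range_succ']
  rw [mul_comm]
  congr 1
  · rw [pathPoint_zero, pathPoint_one]
    norm_num
  · apply Finset.prod_congr rfl
    intro k _
    rw [pathPoint_succ, pathPoint_succ]
    congr 3
    push_cast
    ring

lemma pathWeight_pos (F : ℤ → ℝ → ℝ) (m : ℤ) (s : ℕ) (x y : ℝ) (z : Fin s → ℝ) :
    0 < pathWeight F m s x y z := by
  unfold pathWeight
  exact Finset.prod_pos fun k _ => mul_pos (gauss_pos _) (Real.exp_pos _)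

lemma continuous_pathPoint (s : ℕ) (y : ℝ) (i : ℕ) :
    Continuous (fun p : ℝ × (Fin s → ℝ) => pathPoint s p.1 y p.2 i) := by
  unfold pathPoint
  split_ifs with h1 h2
  · exact continuous_fst
  · exact (continuous_apply _).comp continuous_snd
  · exact continuous_const

lemma continuous_pathWeight (F : ℤ → ℝ → ℝ) (hF : ∀ k, Continuous (F k)) (m : ℤ) (s : ℕ)
    (y : ℝ) : Continuous (fun p : ℝ × (Fin s → ℝ) => pathWeight F m s p.1 y p.2) := by
  unfold pathWeight
  apply continuous_finset_prod
  intro k _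
  exact ((continuous_gauss.comp ((continuous_pathPoint s y (k + 1)).sub
      (continuous_pathPoint s y k))).mul
    ((Real.continuous_exp.comp (((hF (m + k)).comp (continuous_pathPoint s y k)).neg))))

noncomputable def finSplit (s : ℕ) : (Fin (s + 1) → ℝ) ≃ᵐ ℝ × (Fin s → ℝ) :=
  MeasurableEquiv.piFinSuccAbove (fun _ => ℝ) 0

lemma finSplit_apply (s : ℕ) (z : Fin (s + 1) → ℝ) :
    finSplit s z = (z 0, fun j => z j.succ) := by
  simp only [finSplit, MeasurableEquiv.piFinSuccAbove_apply, Fin.zero_succAbove]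
  rfl

lemma finSplit_symm_apply (s : ℕ) (t : ℝ) (w : Fin s → ℝ) :
    (finSplit s).symm (t, w) = Fin.cons t w := by
  simp [finSplit, MeasurableEquiv.piFinSuccAbove_symm_apply, Fin.insertNth_zero', Fin.consEquiv]

lemma finSplit_mp (s : ℕ) :
    MeasurePreserving (finSplit s) (volume : Measure (Fin (s + 1) → ℝ))
      ((volume : Measure ℝ).prod (volume : Measure (Fin s → ℝ))) :=
  measurePreserving_piFinSuccAbove (fun _ => (volume : Measure ℝ)) 0

instance : IsProbabilityMeasure (volume : Measure (Fin 0 → ℝ)) :=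
  ⟨by rw [volume_pi, Measure.pi_univ]; simp⟩

lemma integral_fin0 (h : (Fin 0 → ℝ) → ℝ) : ∫ z, h z = h default := by
  have : h = fun _ => h default := funext fun z => congrArg h (Subsingleton.elim _ _)
  rw [this, integral_const]
  simp

lemma pathWeight_zero (F : ℤ → ℝ → ℝ) (m : ℤ) (x y : ℝ) (z : Fin 0 → ℝ) :
    pathWeight F m 0 x y z = gauss (y - x) * Real.exp (-F m x) := by
  unfold pathWeight pathPoint
  rw [Finset.prod_range_one]
  norm_num

section Main

variable (F : ℤ → ℝ → ℝ) (hF : ∀ k, Continuous (F k))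
  (hgrow : ∀ k, ∃ C, ∀ t, |F k t| ≤ C * (|t| + 1))

include hF hgrow in
lemma intZ : ∀ (s : ℕ) (m : ℤ) (y : ℝ), ∃ c B : ℝ, 0 ≤ c ∧ 0 ≤ B ∧ ∀ x,
    Integrable (pathWeight F m s x y) ∧
      ∫ z, pathWeight F m s x y z ≤ B * Real.exp (c * |x|) := by
  intro s
  induction s with
  | zero =>
    intro m y
    obtain ⟨C0, hC0⟩ := hgrow m
    refine ⟨|C0|, (Real.sqrt (2 * Real.pi))⁻¹ * Real.exp |C0|, abs_nonneg _, by positivity,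
      fun x => ?_⟩
    have hconst : pathWeight F m 0 x y = fun _ => gauss (y - x) * Real.exp (-F m x) :=
      funext fun z => pathWeight_zero F m x y z
    constructor
    · rw [hconst]; exact integrable_const _
    · rw [integral_fin0, pathWeight_zero]
      have h1 : gauss (y - x) ≤ (Real.sqrt (2 * Real.pi))⁻¹ := by
        unfold gauss
        nth_rewrite 2 [← mul_one (Real.sqrt (2 * Real.pi))⁻¹]
        refine mul_le_mul_of_nonneg_left ?_ (by positivity)
        rw [Real.exp_le_one_iff]
        nlinarith [sq_nonneg (y - x)]
      have h2 : Real.exp (-F m x) ≤ Real.exp (|C0| * |x| + |C0|) := by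
        refine Real.exp_le_exp.2 ?_
        have := hC0 x
        have habs : |F m x| ≤ |C0| * (|x| + 1) := by
          refine this.trans ?_
          exact mul_le_mul_of_nonneg_right (le_abs_self C0) (by positivity)
        nlinarith [neg_abs_le (F m x)]
      calc gauss (y - x) * Real.exp (-F m x)
          ≤ (Real.sqrt (2 * Real.pi))⁻¹ * Real.exp (|C0| * |x| + |C0|) :=
            mul_le_mul h1 h2 (Real.exp_pos _).le (by positivity)
        _ = (Real.sqrt (2 * Real.pi))⁻¹ * Real.exp |C0| * Real.exp (|C0| * |x|) := by
            rw [mul_assoc, ← Real.exp_add]; ring_nf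
  | succ s ih =>
    intro m y
    obtain ⟨c, B, hc, hB, hIH⟩ := ih (m + 1) y
    obtain ⟨C0, hC0⟩ := hgrow m
    refine ⟨c + |C0|, 2 * B * Real.exp (|C0| + c ^ 2 / 2), by positivity, by positivity,
      fun x => ?_⟩
    set κ := Real.exp (-F m x) with hκ
    have hκpos : 0 < κ := Real.exp_pos _
    have hκle : κ ≤ Real.exp (|C0| * |x| + |C0|) := by
      refine Real.exp_le_exp.2 ?_
      have := hC0 x
      have habs : |F m x| ≤ |C0| * (|x| + 1) :=
        this.trans (mul_le_mul_of_nonneg_right (le_abs_self C0) (by positivity))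
      nlinarith [neg_abs_le (F m x)]
    have hWcont := continuous_pathWeight F hF (m + 1) s y
    have hZnn : ∀ t, 0 ≤ ∫ w, pathWeight F (m + 1) s t y w :=
      fun t => integral_nonneg fun w => (pathWeight_pos F (m + 1) s t y w).le
    have hgx : Continuous (fun t : ℝ => gauss (t - x) * κ) :=
      (continuous_gauss.comp (continuous_id.sub continuous_const)).mul continuous_const
    have hZsm : StronglyMeasurable (fun t => ∫ w, pathWeight F (m + 1) s t y w) :=
      hWcont.stronglyMeasurable.integral_prod_right'
    have hbnd : Integrable (fun t => κ * B * (gauss (t - x) * Real.exp (c * |t|))) :=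
      (integrable_gauss_abs_exp hc x).const_mul _
    have hptw : ∀ t, gauss (t - x) * κ * (∫ w, pathWeight F (m + 1) s t y w) ≤
        κ * B * (gauss (t - x) * Real.exp (c * |t|)) := by
      intro t
      have h1 := (hIH t).2
      have h2 := mul_le_mul_of_nonneg_left h1 (mul_nonneg (gauss_pos (t - x)).le hκpos.le)
      nlinarith [h2]
    have hdom : Integrable
        (fun t => gauss (t - x) * κ * ∫ w, pathWeight F (m + 1) s t y w) := by
      refine hbnd.mono' ((hgx.stronglyMeasurable.mul hZsm).aestronglyMeasurable)
        (ae_of_all _ fun t => ?_)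
      rw [Real.norm_of_nonneg (mul_nonneg (mul_nonneg (gauss_pos _).le hκpos.le) (hZnn t))]
      exact hptw t
    set Φ : ℝ × (Fin s → ℝ) → ℝ :=
      fun p => gauss (p.1 - x) * κ * pathWeight F (m + 1) s p.1 y p.2 with hΦ
    have hΦcont : Continuous Φ :=
      ((continuous_gauss.comp (continuous_fst.sub continuous_const)).mul
        continuous_const).mul hWcont
    have hΦnn : ∀ p, 0 ≤ Φ p := fun p =>
      mul_nonneg (mul_nonneg (gauss_pos _).le hκpos.le)
        (pathWeight_pos F (m + 1) s p.1 y p.2).le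
    have hΦint : Integrable Φ ((volume : Measure ℝ).prod volume) := by
      refine (integrable_prod_iff hΦcont.aestronglyMeasurable).2 ⟨ae_of_all _ fun t => ?_, ?_⟩
      · exact (hIH t).1.const_mul (gauss (t - x) * κ)
      · have heq : (fun t => ∫ w, ‖Φ (t, w)‖) =
            fun t => gauss (t - x) * κ * ∫ w, pathWeight F (m + 1) s t y w := by
          funext t
          calc ∫ w, ‖Φ (t, w)‖ = ∫ w, gauss (t - x) * κ * pathWeight F (m + 1) s t y w :=
                integral_congr_ae (ae_of_all _ fun w => Real.norm_of_nonneg (hΦnn _))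
            _ = _ := integral_const_mul _ _
        rw [heq]; exact hdom
    have hcomp : pathWeight F m (s + 1) x y = Φ ∘ (finSplit s) := by
      funext z
      rw [Function.comp_apply, finSplit_apply, pathWeight_succ]
    have hint : Integrable (pathWeight F m (s + 1) x y) := by
      rw [hcomp]
      exact ((finSplit_mp s).integrable_comp_emb
        (MeasurableEquiv.measurableEmbedding _)).2 hΦint
    refine ⟨hint, ?_⟩
    have hval : ∫ z, pathWeight F m (s + 1) x y z =
        ∫ t, gauss (t - x) * κ * ∫ w, pathWeight F (m + 1) s t y w := by
      rw [hcomp]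
      have h1 : ∫ z, (Φ ∘ finSplit s) z = ∫ p, Φ p ∂((volume : Measure ℝ).prod volume) :=
        (finSplit_mp s).integral_comp (MeasurableEquiv.measurableEmbedding _) Φ
      rw [h1, integral_prod _ hΦint]
      refine integral_congr_ae (ae_of_all _ fun t => ?_)
      exact integral_const_mul (gauss (t - x) * κ) (fun w => pathWeight F (m + 1) s t y w)
    rw [hval]
    have step1 : ∫ t, gauss (t - x) * κ * ∫ w, pathWeight F (m + 1) s t y w ≤
        κ * B * ∫ t, gauss (t - x) * Real.exp (c * |t|) := by
      rw [← integral_const_mul]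
      exact integral_mono hdom hbnd hptw
    refine step1.trans ?_
    have step2 : κ * B * ∫ t, gauss (t - x) * Real.exp (c * |t|) ≤
        κ * B * (2 * Real.exp (c ^ 2 / 2 + c * |x|)) :=
      mul_le_mul_of_nonneg_left (integral_gauss_abs_exp_le hc x) (by positivity)
    refine step2.trans ?_
    have step3 : κ * B * (2 * Real.exp (c ^ 2 / 2 + c * |x|)) ≤
        Real.exp (|C0| * |x| + |C0|) * B * (2 * Real.exp (c ^ 2 / 2 + c * |x|)) := by
      have h2 : (0:ℝ) ≤ B * (2 * Real.exp (c ^ 2 / 2 + c * |x|)) := by positivity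
      nlinarith [Real.exp_pos (c ^ 2 / 2 + c * |x|)]
    refine step3.trans (le_of_eq ?_)
    have hee : Real.exp (|C0| * |x| + |C0|) * Real.exp (c ^ 2 / 2 + c * |x|) =
        Real.exp (|C0| + c ^ 2 / 2) * Real.exp ((c + |C0|) * |x|) := by
      rw [← Real.exp_add, ← Real.exp_add]; congr 1; ring
    linear_combination 2 * B * hee

lemma measurable_consMap (s : ℕ) :
    Measurable (fun p : ℝ × (Fin s → ℝ) => (Fin.cons p.1 p.2 : Fin (s + 1) → ℝ)) := by
  have : (fun p : ℝ × (Fin s → ℝ) => (Fin.cons p.1 p.2 : Fin (s + 1) → ℝ)) =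
      (finSplit s).symm := by
    funext p
    rw [← finSplit_symm_apply s p.1 p.2]
  rw [this]
  exact (finSplit s).symm.measurable

include hF hgrow in
lemma reprStep (s : ℕ) (m : ℤ) (x y : ℝ) (f : (Fin (s + 1) → ℝ) → ℝ) (hfm : Measurable f)
    (C : ℝ) (hbd : ∀ z, |f z| ≤ C) :
    Integrable (fun t => gauss (t - x) *
        ∫ w, f (Fin.cons t w) * pathWeight F (m + 1) s t y w) ∧
    ∫ z, f z * pathWeight F m (s + 1) x y z =
      Real.exp (-F m x) *
        ∫ t, gauss (t - x) * ∫ w, f (Fin.cons t w) * pathWeight F (m + 1) s t y w := by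
  set κ := Real.exp (-F m x) with hκ
  have hκpos : 0 < κ := Real.exp_pos _
  obtain ⟨c1, B1, _, _, hint1⟩ := intZ F hF hgrow (s + 1) m y
  -- Integrable of the base product function
  have hWint : Integrable (pathWeight F m (s + 1) x y) := (hint1 x).1
  have hGbase : Integrable (fun p : ℝ × (Fin s → ℝ) =>
      pathWeight F m (s + 1) x y ((finSplit s).symm p)) ((volume : Measure ℝ).prod volume) := by
    have hmp := ((finSplit_mp s).symm (finSplit s))
    exact (hmp.integrable_comp_emb (MeasurableEquiv.measurableEmbedding _)).2 hWint
  have hGbase_eq : ∀ p : ℝ × (Fin s → ℝ),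
      pathWeight F m (s + 1) x y ((finSplit s).symm p) =
        κ * (gauss (p.1 - x) * pathWeight F (m + 1) s p.1 y p.2) := by
    rintro ⟨t, w⟩
    rw [finSplit_symm_apply, pathWeight_succ]
    simp only [Fin.cons_zero]
    have : (fun j : Fin s => (Fin.cons t w : Fin (s + 1) → ℝ) j.succ) = w := by
      funext j; simp
    rw [this]
    ring
  have hGint : Integrable (fun p : ℝ × (Fin s → ℝ) =>
      gauss (p.1 - x) * pathWeight F (m + 1) s p.1 y p.2)
      ((volume : Measure ℝ).prod volume) := by
    have := (hGbase.const_mul κ⁻¹)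
    refine this.congr (ae_of_all _ fun p => ?_)
    show κ⁻¹ * pathWeight F m (s + 1) x y ((finSplit s).symm p) = _
    rw [hGbase_eq p]
    field_simp
  set Ψ : ℝ × (Fin s → ℝ) → ℝ := fun p =>
    f (Fin.cons p.1 p.2) * (gauss (p.1 - x) * pathWeight F (m + 1) s p.1 y p.2) with hΨ
  have hΨint : Integrable Ψ ((volume : Measure ℝ).prod volume) := by
    refine hGint.bdd_mul ((hfm.comp (measurable_consMap s)).aestronglyMeasurable) (c := C) (ae_of_all _ fun p => ?_)
    rw [Real.norm_eq_abs]
    exact hbd _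
  have hinner : ∀ t, ∫ w, Ψ (t, w) =
      gauss (t - x) * ∫ w, f (Fin.cons t w) * pathWeight F (m + 1) s t y w := by
    intro t
    rw [← integral_const_mul (gauss (t - x))
      (fun w => f (Fin.cons t w) * pathWeight F (m + 1) s t y w)]
    refine integral_congr_ae (ae_of_all _ fun w => ?_)
    show f (Fin.cons t w) * (gauss (t - x) * pathWeight F (m + 1) s t y w) = _
    ring
  constructor
  · have := hΨint.integral_prod_left
    refine this.congr (ae_of_all _ fun t => ?_)
    exact hinner t
  · have hfW : (fun z => f z * pathWeight F m (s + 1) x y z) =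
        fun z => κ * Ψ (finSplit s z) := by
      funext z
      rw [finSplit_apply]
      show f z * pathWeight F m (s + 1) x y z =
        κ * (f (Fin.cons (z 0) fun j => z j.succ) *
          (gauss (z 0 - x) * pathWeight F (m + 1) s (z 0) y fun j => z j.succ))
      rw [show (Fin.cons (z 0) fun j => z j.succ : Fin (s + 1) → ℝ) = z from
        Fin.cons_self_tail z, pathWeight_succ]
      ring
    rw [hfW]
    have h3 : ∫ z, κ * Ψ (finSplit s z) = κ * ∫ z, Ψ (finSplit s z) :=
      integral_const_mul κ _
    rw [h3]
    congr 1
    have h4 : ∫ z, Ψ (finSplit s z) = ∫ p, Ψ p ∂((volume : Measure ℝ).prod volume) :=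
      (finSplit_mp s).integral_comp (MeasurableEquiv.measurableEmbedding _) Ψ
    rw [h4, integral_prod _ hΨint]
    exact integral_congr_ae (ae_of_all _ fun t => hinner t)

include hF hgrow in
lemma intPos : ∀ (s : ℕ) (m : ℤ) (x y : ℝ), 0 < ∫ z, pathWeight F m s x y z := by
  intro s
  induction s with
  | zero =>
    intro m x y
    rw [integral_fin0]
    exact pathWeight_pos F m 0 x y default
  | succ s ih =>
    intro m x y
    have hrepr := reprStep F hF hgrow s m x y (fun _ => 1) measurable_const 1
      (fun z => by norm_num)
    have h1 : ∫ z, pathWeight F m (s + 1) x y z =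
        Real.exp (-F m x) *
          ∫ t, gauss (t - x) * ∫ w, pathWeight F (m + 1) s t y w := by
      have := hrepr.2
      simpa using this
    rw [h1]
    refine mul_pos (Real.exp_pos _) ?_
    have hpos : ∀ t : ℝ, 0 < gauss (t - x) * ∫ w, pathWeight F (m + 1) s t y w :=
      fun t => mul_pos (gauss_pos _) (ih (m + 1) t y)
    have hintg : Integrable (fun t => gauss (t - x) * ∫ w, pathWeight F (m + 1) s t y w) := by
      have := hrepr.1
      refine this.congr (ae_of_all _ fun t => ?_)
      simp
    refine (integral_pos_iff_support_of_nonneg (fun t => (hpos t).le) hintg).2 ?_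
    have : Function.support (fun t => gauss (t - x) * ∫ w, pathWeight F (m + 1) s t y w) =
        Set.univ := Set.eq_univ_of_forall fun t => (hpos t).ne'
    rw [this]
    simp

lemma mlr {p q φ : ℝ → ℝ} (hp : Integrable p) (hq : Integrable q)
    (hφp : Integrable (fun t => φ t * p t)) (hφq : Integrable (fun t => φ t * q t))
    (hmono : Monotone φ)
    (hmlr : ∀ a b : ℝ, b ≤ a → q b * p a ≤ q a * p b) :
    (∫ t, φ t * p t) * (∫ t, q t) ≤ (∫ t, φ t * q t) * (∫ t, p t) := by
  have h1 : Integrable (fun z : ℝ × ℝ => (φ z.1 * q z.1) * p z.2)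
      ((volume : Measure ℝ).prod volume) := hφq.mul_prod hp
  have h2 : Integrable (fun z : ℝ × ℝ => (φ z.1 * p z.1) * q z.2)
      ((volume : Measure ℝ).prod volume) := hφp.mul_prod hq
  have h3 : Integrable (fun z : ℝ × ℝ => q z.1 * (φ z.2 * p z.2))
      ((volume : Measure ℝ).prod volume) := hq.mul_prod hφp
  have h4 : Integrable (fun z : ℝ × ℝ => p z.1 * (φ z.2 * q z.2))
      ((volume : Measure ℝ).prod volume) := hp.mul_prod hφq
  have hDpt : ∀ z : ℝ × ℝ, 0 ≤ (φ z.1 - φ z.2) * (q z.1 * p z.2 - q z.2 * p z.1) := by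
    rintro ⟨a, b⟩
    rcases le_total b a with h | h
    · exact mul_nonneg (sub_nonneg.2 (hmono h)) (sub_nonneg.2 (hmlr a b h))
    · nlinarith [mul_nonneg (sub_nonneg.2 (hmono h)) (sub_nonneg.2 (hmlr b a h))]
  have hDint : 0 ≤ ∫ z : ℝ × ℝ, (φ z.1 - φ z.2) * (q z.1 * p z.2 - q z.2 * p z.1)
      ∂((volume : Measure ℝ).prod volume) :=
    integral_nonneg hDpt
  have hexp : (fun z : ℝ × ℝ => (φ z.1 - φ z.2) * (q z.1 * p z.2 - q z.2 * p z.1)) =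
      fun z : ℝ × ℝ => ((φ z.1 * q z.1) * p z.2 + p z.1 * (φ z.2 * q z.2)) -
        ((φ z.1 * p z.1) * q z.2 + q z.1 * (φ z.2 * p z.2)) := by
    funext z
    ring
  rw [hexp] at hDint
  have h14 : Integrable (fun z : ℝ × ℝ => (φ z.1 * q z.1) * p z.2 + p z.1 * (φ z.2 * q z.2))
      ((volume : Measure ℝ).prod volume) := h1.add h4
  have h23 : Integrable (fun z : ℝ × ℝ => (φ z.1 * p z.1) * q z.2 + q z.1 * (φ z.2 * p z.2))
      ((volume : Measure ℝ).prod volume) := h2.add h3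
  rw [integral_sub h14 h23, integral_add h1 h4, integral_add h2 h3,
    integral_prod_mul (fun a => φ a * q a) p, integral_prod_mul p (fun a => φ a * q a),
    integral_prod_mul (fun a => φ a * p a) q, integral_prod_mul q (fun a => φ a * p a)]
    at hDint
  linarith

lemma cons_le_cons {s : ℕ} {a b : ℝ} {w w' : Fin s → ℝ} (hab : a ≤ b) (hww : w ≤ w') :
    (Fin.cons a w : Fin (s + 1) → ℝ) ≤ Fin.cons b w' := by
  intro i
  refine Fin.cases ?_ (fun j => ?_) i
  · simpa using hab
  · simpa using hww j

include hF hgrow in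
lemma mainInd : ∀ (s : ℕ) (m : ℤ) (x x' y : ℝ), x ≤ x' →
    ∀ (f : (Fin s → ℝ) → ℝ), Measurable f → Monotone f → ∀ C : ℝ, (∀ z, |f z| ≤ C) →
    (∫ z, f z * pathWeight F m s x y z) * (∫ z, pathWeight F m s x' y z) ≤
      (∫ z, f z * pathWeight F m s x' y z) * (∫ z, pathWeight F m s x y z) := by
  intro s
  induction s with
  | zero =>
    intro m x x' y _ f _ _ C _
    rw [integral_fin0, integral_fin0, integral_fin0, integral_fin0]
    ring_nf
    exact le_refl _
  | succ s ih =>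
    intro m x x' y hxx f hfm hfmono C hbd
    set Z : ℝ → ℝ := fun t => ∫ w, pathWeight F (m + 1) s t y w with hZ
    set H : ℝ → ℝ := fun t => ∫ w, f (Fin.cons t w) * pathWeight F (m + 1) s t y w with hH
    have hZpos : ∀ t, 0 < Z t := fun t => intPos F hF hgrow s (m + 1) t y
    obtain ⟨c2, B2, _, _, hi2⟩ := intZ F hF hgrow s (m + 1) y
    have hre1 := reprStep F hF hgrow s m x y f hfm C hbd
    have hre2 := reprStep F hF hgrow s m x' y f hfm C hbd
    have hrz1 := reprStep F hF hgrow s m x y (fun _ => 1) measurable_const 1 (fun z => by norm_num)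
    have hrz2 := reprStep F hF hgrow s m x' y (fun _ => 1) measurable_const 1
      (fun z => by norm_num)
    set p : ℝ → ℝ := fun t => gauss (t - x) * Z t with hp_def
    set q : ℝ → ℝ := fun t => gauss (t - x') * Z t with hq_def
    set φ : ℝ → ℝ := fun t => H t / Z t with hφ_def
    have hp : Integrable p := by
      refine hrz1.1.congr (ae_of_all _ fun t => ?_)
      show gauss (t - x) * ∫ w, (1:ℝ) * pathWeight F (m + 1) s t y w = p t
      simp [hp_def, hZ]
    have hq : Integrable q := by
      refine hrz2.1.congr (ae_of_all _ fun t => ?_)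
      show gauss (t - x') * ∫ w, (1:ℝ) * pathWeight F (m + 1) s t y w = q t
      simp [hq_def, hZ]
    have hφp_eq : ∀ t, φ t * p t = gauss (t - x) * H t := by
      intro t
      show H t / Z t * (gauss (t - x) * Z t) = gauss (t - x) * H t
      field_simp [(hZpos t).ne']
    have hφq_eq : ∀ t, φ t * q t = gauss (t - x') * H t := by
      intro t
      show H t / Z t * (gauss (t - x') * Z t) = gauss (t - x') * H t
      field_simp [(hZpos t).ne']
    have hφp : Integrable (fun t => φ t * p t) :=
      hre1.1.congr (ae_of_all _ fun t => (hφp_eq t).symm)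
    have hφq : Integrable (fun t => φ t * q t) :=
      hre2.1.congr (ae_of_all _ fun t => (hφq_eq t).symm)
    have hfcons_meas : ∀ t : ℝ, Measurable (fun w : Fin s → ℝ => f (Fin.cons t w)) := by
      intro t
      exact hfm.comp ((measurable_consMap s).comp (measurable_const.prodMk measurable_id))
    have hmonoφ : Monotone φ := by
      intro t t' htt
      have hfm_t : Monotone (fun w : Fin s → ℝ => f (Fin.cons t w)) :=
        fun w w' hww => hfmono (cons_le_cons le_rfl hww)
      have step1 := ih (m + 1) t t' y htt (fun w => f (Fin.cons t w)) (hfcons_meas t)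
        hfm_t C (fun w => hbd _)
      have step2 : ∫ w, f (Fin.cons t w) * pathWeight F (m + 1) s t' y w ≤ H t' := by
        refine integral_mono ?_ ?_ ?_
        · exact (hi2 t').1.bdd_mul (hfcons_meas t).aestronglyMeasurable (c := C) (ae_of_all _ fun w => hbd _)
        · exact (hi2 t').1.bdd_mul (hfcons_meas t').aestronglyMeasurable (c := C) (ae_of_all _ fun w => hbd _)
        · intro w
          exact mul_le_mul_of_nonneg_right (hfmono (cons_le_cons htt le_rfl))
            (pathWeight_pos F (m + 1) s t' y w).le
      show H t / Z t ≤ H t' / Z t'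
      rw [div_le_div_iff₀ (hZpos t) (hZpos t')]
      calc H t * Z t' ≤ (∫ w, f (Fin.cons t w) * pathWeight F (m + 1) s t' y w) * Z t := step1
        _ ≤ H t' * Z t := mul_le_mul_of_nonneg_right step2 (hZpos t).le
    have hmlr : ∀ a b : ℝ, b ≤ a → q b * p a ≤ q a * p b := by
      intro a b hab
      show gauss (b - x') * Z b * (gauss (a - x) * Z a) ≤
        gauss (a - x') * Z a * (gauss (b - x) * Z b)
      have h1 := mul_le_mul_of_nonneg_right (gauss_mlr hab hxx)
        (mul_nonneg (hZpos a).le (hZpos b).le)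
      nlinarith [h1]
    have key := mlr hp hq hφp hφq hmonoφ hmlr
    rw [integral_congr_ae (ae_of_all _ hφp_eq), integral_congr_ae (ae_of_all _ hφq_eq)] at key
    -- rewrite the four polymer integrals
    have eA1 : ∫ z, pathWeight F m (s + 1) x y z =
        Real.exp (-F m x) * ∫ t, gauss (t - x) * Z t := by
      have := hrz1.2
      simpa [hZ] using this
    have eA2 : ∫ z, pathWeight F m (s + 1) x' y z =
        Real.exp (-F m x') * ∫ t, gauss (t - x') * Z t := by
      have := hrz2.2
      simpa [hZ] using this
    rw [hre1.2, hre2.2, eA1, eA2]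
    have hκ1 : 0 < Real.exp (-F m x) := Real.exp_pos _
    have hκ2 : 0 < Real.exp (-F m x') := Real.exp_pos _
    nlinarith [key, mul_pos hκ1 hκ2]

include hF hgrow in
set_option maxHeartbeats 1000000 in
lemma integral_polymer (s : ℕ) (m : ℤ) (x y : ℝ) (f : (Fin s → ℝ) → ℝ)
    (hfm : Measurable f) :
    ∫ z, f z ∂(polymerMeasure F m s x y) =
      (∫ z, f z * pathWeight F m s x y z) / (∫ z, pathWeight F m s x y z) := by
  have hWc : Continuous (fun z : Fin s → ℝ => pathWeight F m s x y z) := by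
    have h := continuous_pathWeight F hF m s y
    have heq : (fun z : Fin s → ℝ => pathWeight F m s x y z) =
        (fun p : ℝ × (Fin s → ℝ) => pathWeight F m s p.1 y p.2) ∘ (fun z => (x, z)) := rfl
    rw [heq]
    exact h.comp (continuous_const.prodMk continuous_id)
  have hA : 0 < ∫ z, pathWeight F m s x y z := intPos F hF hgrow s m x y
  unfold polymerMeasure
  rw [integral_smul_measure]
  simp only [ENNReal.ofReal]
  rw [integral_withDensity_eq_integral_smul
    (f := fun z => (pathWeight F m s x y z).toNNReal) hWc.measurable.real_toNNReal f]
  have h1 : ∀ z, (pathWeight F m s x y z).toNNReal • f z = f z * pathWeight F m s x y z := by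
    intro z
    rw [NNReal.smul_def, Real.coe_toNNReal _ (pathWeight_pos F m s x y z).le, smul_eq_mul]
    ring
  rw [integral_congr_ae (ae_of_all _ h1)]
  rw [ENNReal.toReal_inv, ENNReal.coe_toReal,
    Real.coe_toNNReal _ hA.le, smul_eq_mul, div_eq_inv_mul]

theorem stmt11 (F : ℤ → ℝ → ℝ) (hF : ∀ k, Continuous (F k))
    (hgrow : ∀ k, ∃ C, ∀ t, |F k t| ≤ C * (|t| + 1))
    (m : ℤ) (s : ℕ) (x x' y : ℝ) (hxx : x ≤ x') :
    ∀ f : (Fin s → ℝ) → ℝ, Measurable f → Monotone f → (∃ C, ∀ z, |f z| ≤ C) →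
      ∫ z, f z ∂(polymerMeasure F m s x y) ≤ ∫ z, f z ∂(polymerMeasure F m s x' y) := by
  intro f hfm hfmono hbd
  obtain ⟨C, hC⟩ := hbd
  rw [integral_polymer F hF hgrow s m x y f hfm, integral_polymer F hF hgrow s m x' y f hfm]
  rw [div_le_div_iff₀ (intPos F hF hgrow s m x y) (intPos F hF hgrow s m x' y)]
  exact mainInd F hF hgrow s m x x' y hxx f hfm hfmono C hC


end Main
end
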